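/- Let A ∈ ℝ^{n×d} have thin SVD A = UΣVᵀ, let 1 ≤ k < rank(A), let U_k consist of the top k left singular vectors, and let A_{k,⊥} = A − A_k. Define sampling probabilities p_i = (1/2)‖(U_k)_{i*}‖₂²/k + (1/2)‖(A_{k,⊥})_{i*}‖₂²/‖A_{k,⊥}‖_F², and let W ∈ ℝ^{s×n} be the random sampling-and-rescaling matrix of Algorithm 1 built from these probabilities. For ε > 0 and δ ∈ (0,1), if s ≥ 8k/(δ ε²), then P(|‖W A_{k,⊥}‖_F² − ‖A_{k,⊥}‖_F²| ≥ (ε/√k) ‖A_{k,⊥}‖_F²) ≤ δ/4 and P(‖A_{k,⊥}ᵀ Wᵀ W A_{k,⊥} − A_{k,⊥}ᵀ A_{k,⊥}‖_F ≥ (ε/√k) ‖A_{k,⊥}‖_F²) ≤ δ/4. -/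

import Mathlib

open Matrix BigOperators

noncomputable def frobNorm {m n : Type*} [Fintype m] [Fintype n]
    (A : Matrix m n ℝ) : ℝ := Real.sqrt (∑ i, ∑ j, (A i j) ^ 2)

noncomputable def specNorm {m n : ℕ} (A : Matrix (Fin m) (Fin n) ℝ) : ℝ :=
  ‖LinearMap.toContinuousLinearMap (Matrix.toEuclideanLin A)‖

noncomputable def truncDiag {r : ℕ} (σ : Fin r → ℝ) (m : ℕ) :
    Matrix (Fin r) (Fin r) ℝ :=
  Matrix.diagonal fun i => if (i : ℕ) < m then σ i else 0

noncomputable def samplingMatrix {n : ℕ} (p : Fin n → ℝ) (s : ℕ) (ω : Fin s → Fin n) :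
    Matrix (Fin s) (Fin n) ℝ :=
  fun i j => if j = ω i then 1 / Real.sqrt (s * p j) else 0

noncomputable def expec {n s : ℕ} (p : Fin n → ℝ) (f : (Fin s → Fin n) → ℝ) : ℝ :=
  ∑ ω : Fin s → Fin n, (∏ i, p (ω i)) * f ω

open Classical in
noncomputable def probOf {n s : ℕ} (p : Fin n → ℝ) (E : (Fin s → Fin n) → Prop) : ℝ :=
  ∑ ω : Fin s → Fin n, if E ω then (∏ i, p (ω i)) else 0

def firstCols {n r : ℕ} (U : Matrix (Fin n) (Fin r) ℝ) (k : ℕ) (h : k ≤ r) :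
    Matrix (Fin n) (Fin k) ℝ :=
  fun i j => U i (Fin.castLE h j)

noncomputable def ridgeDiag {r : ℕ} (σ : Fin r → ℝ) (lam : ℝ) :
    Matrix (Fin r) (Fin r) ℝ :=
  Matrix.diagonal fun i => σ i / Real.sqrt (σ i ^ 2 + lam)

/-! ### Auxiliary probabilistic lemmas -/

section aux
variable {n s : ℕ} (p : Fin n → ℝ)

lemma expec_prod (G : Fin s → Fin n → ℝ) :
    expec p (fun ω => ∏ i, G i (ω i)) = ∏ i, ∑ j, p j * G i j := by
  rw [Fintype.prod_sum]
  unfold expec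
  exact Finset.sum_congr rfl fun ω _ => (Finset.prod_mul_distrib).symm

lemma expec_one : expec p (fun _ : Fin s → Fin n => (1:ℝ)) = ∏ _i : Fin s, ∑ j, p j := by
  have := expec_prod p (s := s) (fun _ _ => (1:ℝ))
  simpa using this

lemma expec_const (hp1 : ∑ j, p j = 1) (c : ℝ) :
    expec p (fun _ : Fin s → Fin n => c) = c := by
  unfold expec
  rw [← Finset.sum_mul]
  have h1 : (∑ ω : Fin s → Fin n, ∏ i, p (ω i)) = 1 := by
    have := expec_one p (s := s)
    unfold expec at this
    simpa [hp1] using this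
  rw [h1, one_mul]

lemma expec_add (f g : (Fin s → Fin n) → ℝ) :
    expec p (fun ω => f ω + g ω) = expec p f + expec p g := by
  unfold expec
  rw [← Finset.sum_add_distrib]
  exact Finset.sum_congr rfl fun ω _ => by ring

lemma expec_const_mul (c : ℝ) (f : (Fin s → Fin n) → ℝ) :
    expec p (fun ω => c * f ω) = c * expec p f := by
  unfold expec
  rw [Finset.mul_sum]
  exact Finset.sum_congr rfl fun ω _ => by ring

lemma expec_sum {ι : Type*} (t : Finset ι) (F : ι → (Fin s → Fin n) → ℝ) :
    expec p (fun ω => ∑ i ∈ t, F i ω) = ∑ i ∈ t, expec p (F i) := by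
  unfold expec
  rw [Finset.sum_comm]
  exact Finset.sum_congr rfl fun ω _ => by rw [Finset.mul_sum]

lemma expec_mono {f g : (Fin s → Fin n) → ℝ} (hp0 : ∀ j, 0 ≤ p j)
    (h : ∀ ω, f ω ≤ g ω) : expec p f ≤ expec p g := by
  unfold expec
  refine Finset.sum_le_sum fun ω _ => ?_
  exact mul_le_mul_of_nonneg_left (h ω) (Finset.prod_nonneg fun i _ => hp0 _)

lemma expec_eval (hp1 : ∑ j, p j = 1) (i₀ : Fin s) (g : Fin n → ℝ) :
    expec p (fun ω => g (ω i₀)) = ∑ j, p j * g j := by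
  have h := expec_prod p (fun i j => if i = i₀ then g j else 1)
  have hl : ∀ ω : Fin s → Fin n, (∏ i, if i = i₀ then g (ω i) else 1) = g (ω i₀) := by
    intro ω
    rw [Finset.prod_eq_single i₀] <;> simp (config := {contextual := true})
  have hr : (∏ i, ∑ j, p j * if i = i₀ then g j else 1) = ∑ j, p j * g j := by
    rw [Finset.prod_eq_single i₀] <;> simp (config := {contextual := true}) [hp1]
  simp only [hl] at h
  rw [h, hr]

lemma expec_eval2 (hp1 : ∑ j, p j = 1) {i₀ i₁ : Fin s} (hne : i₀ ≠ i₁)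
    (g h : Fin n → ℝ) :
    expec p (fun ω => g (ω i₀) * h (ω i₁))
      = (∑ j, p j * g j) * (∑ j, p j * h j) := by
  have hh := expec_prod p (fun i j => if i = i₀ then g j else if i = i₁ then h j else 1)
  have hl : ∀ ω : Fin s → Fin n,
      (∏ i, if i = i₀ then g (ω i) else if i = i₁ then h (ω i) else 1)
        = g (ω i₀) * h (ω i₁) := by
    intro ω
    rw [← Finset.mul_prod_erase Finset.univ _ (Finset.mem_univ i₀),
      ← Finset.mul_prod_erase _ _ (Finset.mem_erase.2 ⟨Ne.symm hne, Finset.mem_univ i₁⟩)]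
    rw [Finset.prod_eq_one]
    · have := hne.symm; simp [this]; try ring
    · intro i hi
      simp only [Finset.mem_erase] at hi
      simp [hi.1, hi.2.1]
  have hr : (∏ i, ∑ j, p j * if i = i₀ then g j else if i = i₁ then h j else 1)
      = (∑ j, p j * g j) * (∑ j, p j * h j) := by
    rw [← Finset.mul_prod_erase Finset.univ _ (Finset.mem_univ i₀),
      ← Finset.mul_prod_erase _ _ (Finset.mem_erase.2 ⟨Ne.symm hne, Finset.mem_univ i₁⟩)]
    rw [Finset.prod_eq_one]
    · simp [hne.symm]
    · intro i hi
      simp only [Finset.mem_erase] at hi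
      simp [hi.1, hi.2.1, hp1]
  simp only [hl] at hh
  rw [hh, hr]

lemma expec_var (hp1 : ∑ j, p j = 1) (f : Fin n → ℝ) :
    expec (s := s) p (fun ω => (∑ i, f (ω i) - s * (∑ j, p j * f j))^2)
      = s * ((∑ j, p j * f j ^ 2) - (∑ j, p j * f j)^2) := by
  set μ := ∑ j, p j * f j with hμ
  set M2 := ∑ j, p j * f j ^ 2 with hM2
  have hexp : ∀ ω : Fin s → Fin n,
      (∑ i, f (ω i) - s * μ)^2
        = (∑ i : Fin s, ∑ i' : Fin s, f (ω i) * f (ω i'))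
          + ((-2 * (s:ℝ) * μ) * ∑ i, f (ω i) + (s:ℝ)^2 * μ^2) := by
    intro ω
    rw [← Finset.sum_mul_sum]
    ring
  simp only [hexp]
  rw [expec_add, expec_add, expec_const_mul, expec_const p hp1,
    expec_sum, expec_sum]
  have hev : expec p (fun ω : Fin s → Fin n => ∑ i, f (ω i)) = s * μ := by
    rw [expec_sum]
    simp [expec_eval p hp1, hμ]
  have hterm : ∀ i : Fin s,
      (∑ i' : Fin s, expec p (fun ω : Fin s → Fin n => f (ω i) * f (ω i')))
        = M2 + ((s:ℝ) - 1) * μ^2 := by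
    intro i
    have : ∀ i' : Fin s, expec p (fun ω : Fin s → Fin n => f (ω i) * f (ω i'))
        = if i' = i then M2 else μ^2 := by
      intro i'
      by_cases h : i' = i
      · subst h
        have := expec_eval p hp1 i' (fun j => f j * f j)
        simp only [if_pos rfl]
        rw [this, hM2]
        exact Finset.sum_congr rfl fun j _ => by ring
      · rw [if_neg h, expec_eval2 p hp1 (fun hh => h hh.symm) f f]
        rw [← hμ]; ring
    simp only [this]
    have h2 : ∀ x : Fin s, (if x = i then M2 else μ^2) = μ^2 + (if x = i then M2 - μ^2 else 0) := by
      intro x; split_ifs <;> ring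
    simp only [h2, Finset.sum_add_distrib, Finset.sum_ite_eq' Finset.univ i,
      Finset.sum_const, Finset.card_univ, Fintype.card_fin, Finset.mem_univ, if_pos,
      nsmul_eq_mul]
    ring
  have hcard : (∑ i : Fin s, (M2 + ((s:ℝ) - 1) * μ^2)) = s * (M2 + ((s:ℝ)-1)*μ^2) := by
    rw [Finset.sum_const, Finset.card_univ, Fintype.card_fin, nsmul_eq_mul]
  have h1 : (∑ i : Fin s, expec p fun ω : Fin s → Fin n => ∑ i' : Fin s, f (ω i) * f (ω i'))
      = s * (M2 + ((s:ℝ)-1)*μ^2) := by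
    rw [← hcard]
    refine Finset.sum_congr rfl fun i _ => ?_
    rw [expec_sum]
    exact hterm i
  have h2 : (∑ i : Fin s, expec p fun ω : Fin s → Fin n => f (ω i)) = s * μ := by
    rw [← expec_sum]; exact hev
  rw [h1, h2]
  ring

lemma markov (hp0 : ∀ j, 0 ≤ p j) {E : (Fin s → Fin n) → Prop}
    {g : (Fin s → Fin n) → ℝ} {t : ℝ}
    (hg : ∀ ω, 0 ≤ g ω) (ht : 0 < t) (himp : ∀ ω, E ω → t ≤ g ω) :
    probOf p E ≤ expec p g / t := by
  classical
  rw [le_div_iff₀ ht]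
  unfold probOf expec
  rw [Finset.sum_mul]
  apply Finset.sum_le_sum
  intro ω _
  have hprodnn : (0:ℝ) ≤ ∏ i, p (ω i) := Finset.prod_nonneg fun i _ => hp0 _
  split_ifs with h
  · calc (∏ i, p (ω i)) * t ≤ (∏ i, p (ω i)) * g ω :=
        mul_le_mul_of_nonneg_left (himp ω h) hprodnn
      _ = _ := rfl
  · simpa using mul_nonneg hprodnn (hg ω)

end aux

/-! ### Auxiliary matrix lemmas -/

lemma frobNorm_sq {m n : Type*} [Fintype m] [Fintype n] (A : Matrix m n ℝ) :
    frobNorm A ^ 2 = ∑ i, ∑ j, (A i j) ^ 2 :=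
  Real.sq_sqrt (by positivity)

lemma frob_conj {n d r : ℕ} (U : Matrix (Fin n) (Fin r) ℝ) (V : Matrix (Fin d) (Fin r) ℝ)
    (hU : Uᵀ * U = 1) (hV : Vᵀ * V = 1) (τ : Fin r → ℝ) :
    ∑ i, ∑ j, ((U * Matrix.diagonal τ * Vᵀ) i j)^2 = ∑ l, τ l ^2 := by
  set M := U * Matrix.diagonal τ * Vᵀ with hM
  have h1 : Mᵀ * M = V * Matrix.diagonal (fun l => τ l ^ 2) * Vᵀ := by
    have ht : Mᵀ = V * Matrix.diagonal τ * Uᵀ := by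
      rw [hM, Matrix.transpose_mul, Matrix.transpose_mul, Matrix.transpose_transpose,
        Matrix.diagonal_transpose, Matrix.mul_assoc]
    rw [ht, hM]
    calc V * Matrix.diagonal τ * Uᵀ * (U * Matrix.diagonal τ * Vᵀ)
        = V * Matrix.diagonal τ * (Uᵀ * U) * (Matrix.diagonal τ * Vᵀ) := by
          simp only [Matrix.mul_assoc]
      _ = V * (Matrix.diagonal τ * Matrix.diagonal τ) * Vᵀ := by
          rw [hU]; simp only [Matrix.mul_one, Matrix.mul_assoc]
      _ = _ := by rw [Matrix.diagonal_mul_diagonal]; congr 2; ext l; ring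
  have h2 : ∑ i, ∑ j, (M i j)^2 = Matrix.trace (Mᵀ * M) := by
    rw [Matrix.trace, Finset.sum_comm]
    refine Finset.sum_congr rfl fun j _ => ?_
    simp [Matrix.diag, Matrix.mul_apply, sq]
  rw [h2, h1]
  rw [Matrix.trace_mul_comm, ← Matrix.mul_assoc, hV, Matrix.one_mul]
  simp [Matrix.trace, Matrix.diag]
set_option maxHeartbeats 1000000 in
/-- leverage-score sampling, residual-term probability bounds. -/
theorem stmt_12 {n d r : ℕ} {k : ℕ} (s : ℕ) (hs : 0 < s)
    (A : Matrix (Fin n) (Fin d) ℝ)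
    (U : Matrix (Fin n) (Fin r) ℝ) (V : Matrix (Fin d) (Fin r) ℝ) (σ : Fin r → ℝ)
    (hU : Uᵀ * U = 1) (hV : Vᵀ * V = 1)
    (hσdec : ∀ i j : Fin r, i ≤ j → σ j ≤ σ i) (hσpos : ∀ i, 0 < σ i)
    (hA : A = U * Matrix.diagonal σ * Vᵀ) (hrank : A.rank = r)
    (hk1 : 1 ≤ k) (hkr : k < r)
    (p : Fin n → ℝ)
    (hpdef : ∀ i, p i =
        1 / 2 * ((∑ j, (firstCols U k hkr.le i j) ^ 2) / k)
      + 1 / 2 * ((∑ j, ((A - U * truncDiag σ k * Vᵀ) i j) ^ 2)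
          / frobNorm (A - U * truncDiag σ k * Vᵀ) ^ 2))
    (ε δ : ℝ) (hε0 : 0 < ε) (hδ0 : 0 < δ) (hδ1 : δ < 1)
    (hsbig : (s : ℝ) ≥ 8 * k / (δ * ε ^ 2)) :
    probOf p (fun (ω : Fin s → Fin n) =>
        ε / Real.sqrt k * frobNorm (A - U * truncDiag σ k * Vᵀ) ^ 2
          ≤ |frobNorm (samplingMatrix p s ω * (A - U * truncDiag σ k * Vᵀ)) ^ 2
              - frobNorm (A - U * truncDiag σ k * Vᵀ) ^ 2|)
      ≤ δ / 4
    ∧ probOf p (fun (ω : Fin s → Fin n) =>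
        ε / Real.sqrt k * frobNorm (A - U * truncDiag σ k * Vᵀ) ^ 2
          ≤ frobNorm ((A - U * truncDiag σ k * Vᵀ)ᵀ * (samplingMatrix p s ω)ᵀ
              * samplingMatrix p s ω * (A - U * truncDiag σ k * Vᵀ)
              - (A - U * truncDiag σ k * Vᵀ)ᵀ * (A - U * truncDiag σ k * Vᵀ)))
      ≤ δ / 4 := by
  classical
  have hsR : (0:ℝ) < s := by exact_mod_cast hs
  have hkR : (0:ℝ) < k := by exact_mod_cast hk1
  set B := A - U * truncDiag σ k * Vᵀ with hB
  set τ : Fin r → ℝ := fun l => if (l:ℕ) < k then 0 else σ l with hτ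
  have hBform : B = U * Matrix.diagonal τ * Vᵀ := by
    rw [hB, hA, truncDiag, ← Matrix.sub_mul, ← Matrix.mul_sub, Matrix.diagonal_sub]
    have hfun : (fun i : Fin r => σ i - if (i:ℕ) < k then σ i else 0) = τ := by
      funext l
      simp only [hτ]
      split_ifs <;> ring
    rw [hfun]
  set rB : Fin n → ℝ := fun i => ∑ j, B i j ^ 2 with hrBdef
  set Fs : ℝ := ∑ i, ∑ j, B i j ^ 2 with hFs
  have hrBnn : ∀ i, 0 ≤ rB i := fun i => by positivity
  have hFsτ : Fs = ∑ l, τ l ^ 2 := by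
    rw [hFs, hBform]; exact frob_conj U V hU hV τ
  have hFspos : 0 < Fs := by
    rw [hFsτ]
    have h1 : (0:ℝ) < τ ⟨k, hkr⟩ ^ 2 := by
      have : τ ⟨k, hkr⟩ = σ ⟨k, hkr⟩ := by simp [hτ]
      rw [this]
      exact pow_pos (hσpos _) 2
    refine lt_of_lt_of_le h1 ?_
    exact Finset.single_le_sum (f := fun l => τ l ^ 2) (fun l _ => by positivity)
      (Finset.mem_univ _)
  have hfrob : frobNorm B ^ 2 = Fs := frobNorm_sq B
  -- leverage scores of U_k sum to k
  have hUk : ∑ i, ∑ j, (firstCols U k hkr.le i j) ^ 2 = (k:ℝ) := by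
    rw [Finset.sum_comm]
    have hcol : ∀ c : Fin k, (∑ i, (firstCols U k hkr.le i c) ^ 2) = 1 := by
      intro c
      have h1 := congrFun (congrFun hU (Fin.castLE hkr.le c)) (Fin.castLE hkr.le c)
      simp only [Matrix.mul_apply, Matrix.transpose_apply, Matrix.one_apply_eq] at h1
      simp only [firstCols, sq]
      exact h1
    simp [hcol]
  -- p facts
  have hp0 : ∀ i, 0 ≤ p i := by
    intro i
    rw [hpdef i]
    have h1 : (0:ℝ) ≤ (∑ j, (firstCols U k hkr.le i j) ^ 2) / k := by positivity
    have h2 : (0:ℝ) ≤ (∑ j, (B i j) ^ 2) / frobNorm B ^ 2 := by positivity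
    nlinarith
  have hplow : ∀ i, rB i / (2 * Fs) ≤ p i := by
    intro i
    rw [hpdef i, hfrob]
    have h1 : (0:ℝ) ≤ (∑ j, (firstCols U k hkr.le i j) ^ 2) / k := by positivity
    have h2 : 1 / 2 * ((∑ j, (B i j) ^ 2) / Fs) = rB i / (2 * Fs) := by
      simp only [hrBdef]; ring
    linarith [h2]
  have hp1 : ∑ i, p i = 1 := by
    have : ∑ i, p i = ∑ i, (1 / 2 * ((∑ j, (firstCols U k hkr.le i j) ^ 2) / k)
        + 1 / 2 * ((∑ j, (B i j) ^ 2) / Fs)) := by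
      refine Finset.sum_congr rfl fun i _ => ?_
      rw [hpdef i, hfrob]
    rw [this, Finset.sum_add_distrib]
    have ha : ∑ i, 1 / 2 * ((∑ j, (firstCols U k hkr.le i j) ^ 2) / k) = 1/2 := by
      rw [← Finset.mul_sum, ← Finset.sum_div, hUk, div_self (ne_of_gt hkR), mul_one]
    have hb : ∑ i, 1 / 2 * ((∑ j, (B i j) ^ 2) / Fs) = 1/2 := by
      rw [← Finset.mul_sum, ← Finset.sum_div, ← hFs, div_self (ne_of_gt hFspos), mul_one]
    rw [ha, hb]; norm_num
  have hBzero : ∀ i, p i = 0 → ∀ j, B i j = 0 := by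
    intro i hpi j
    have h1 : rB i / (2 * Fs) ≤ 0 := hpi ▸ hplow i
    have h2 : rB i = 0 := by
      by_contra hne
      have hq : 0 < rB i := lt_of_le_of_ne (hrBnn i) (Ne.symm hne)
      have hq2 : 0 < rB i / (2 * Fs) := div_pos hq (by positivity)
      linarith
    have h3 : B i j ^ 2 ≤ rB i :=
      Finset.single_le_sum (f := fun l => B i l ^ 2) (fun l _ => by positivity)
        (Finset.mem_univ j)
    nlinarith [sq_nonneg (B i j)]
  set Y : Fin n → ℝ := fun j => rB j / p j with hYdef
  have hYnn : ∀ j, 0 ≤ Y j := fun j => div_nonneg (hrBnn j) (hp0 j)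
  have hrB0 : ∀ j, p j = 0 → rB j = 0 := by
    intro j h
    simp only [hrBdef]
    refine Finset.sum_eq_zero fun l _ => ?_
    rw [hBzero j h l]; ring
  have hpY : ∀ j, p j * Y j = rB j := by
    intro j
    by_cases h : p j = 0
    · simp [hYdef, h, hrB0 j h]
    · simp only [hYdef]; field_simp
  have hYle : ∀ j, Y j ≤ 2 * Fs := by
    intro j
    by_cases h : p j = 0
    · simp only [hYdef, hrB0 j h, zero_div]
      positivity
    · have hppos : 0 < p j := lt_of_le_of_ne (hp0 j) (Ne.symm h)
      simp only [hYdef]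
      rw [div_le_iff₀ hppos]
      have h1' := (div_le_iff₀ (show (0:ℝ) < 2*Fs by positivity)).1 (hplow j)
      linarith [h1', mul_comm (p j) (2*Fs)]
  have hμY : ∑ j, p j * Y j = Fs := by
    rw [Finset.sum_congr rfl fun j _ => hpY j]
  have hpY2 : ∑ j, p j * Y j ^ 2 ≤ 2 * Fs * Fs := by
    have h1 : ∀ j, p j * Y j ^ 2 = rB j * Y j := by
      intro j; rw [sq, ← mul_assoc, hpY j]
    rw [Finset.sum_congr rfl fun j _ => h1 j]
    calc ∑ j, rB j * Y j ≤ ∑ j, rB j * (2 * Fs) :=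
          Finset.sum_le_sum fun j _ => mul_le_mul_of_nonneg_left (hYle j) (hrBnn j)
      _ = (∑ j, rB j) * (2 * Fs) := by rw [← Finset.sum_mul]
      _ = Fs * (2 * Fs) := by simp only [hrBdef, hFs]
      _ = 2 * Fs * Fs := by ring
  have hsne : (s:ℝ) ≠ 0 := ne_of_gt hsR
  have hkne : (k:ℝ) ≠ 0 := ne_of_gt hkR
  have hFne : Fs ≠ 0 := ne_of_gt hFspos
  have hεne : ε ≠ 0 := ne_of_gt hε0
  -- sampling matrix entries
  have hWBent : ∀ (ω : Fin s → Fin n) (i : Fin s) (j : Fin d),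
      (samplingMatrix p s ω * B) i j = B (ω i) j / Real.sqrt (s * p (ω i)) := by
    intro ω i j
    simp only [Matrix.mul_apply, samplingMatrix, ite_mul, zero_mul, one_div]
    rw [Finset.sum_ite_eq' Finset.univ (ω i) (fun l => (Real.sqrt ((s:ℝ) * p l))⁻¹ * B l j)]
    simp [div_eq_inv_mul]
  have hWBsq : ∀ (ω : Fin s → Fin n) (i : Fin s) (j : Fin d),
      ((samplingMatrix p s ω * B) i j) ^ 2 = B (ω i) j ^ 2 / ((s:ℝ) * p (ω i)) := by
    intro ω i j
    rw [hWBent, div_pow, Real.sq_sqrt (mul_nonneg (Nat.cast_nonneg s) (hp0 _))]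
  have hWBfrob : ∀ ω : Fin s → Fin n,
      frobNorm (samplingMatrix p s ω * B) ^ 2 = (∑ i, Y (ω i)) / s := by
    intro ω
    rw [frobNorm_sq]
    rw [Finset.sum_congr rfl fun i (_ : i ∈ Finset.univ) =>
      Finset.sum_congr rfl fun j (_ : j ∈ Finset.univ) => hWBsq ω i j]
    have h1 : ∀ i : Fin s, (∑ j, B (ω i) j ^ 2 / ((s:ℝ) * p (ω i))) = Y (ω i) / s := by
      intro i
      rw [← Finset.sum_div]
      have h2 : ∑ j, B (ω i) j ^ 2 = rB (ω i) := by simp only [hrBdef]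
      rw [h2]
      simp only [hYdef]
      rw [div_div, mul_comm (p (ω i)) ((s:ℝ))]
    rw [Finset.sum_congr rfl fun i (_ : i ∈ Finset.univ) => h1 i, ← Finset.sum_div]
  -- the threshold
  set t1 : ℝ := ε / Real.sqrt k * Fs with ht1
  have hsqrtk : 0 < Real.sqrt k := Real.sqrt_pos.2 hkR
  have ht1pos : 0 < t1 := by rw [ht1]; positivity
  have ht1sq : t1 ^ 2 = ε ^ 2 / k * Fs ^ 2 := by
    rw [ht1, mul_pow, div_pow, Real.sq_sqrt hkR.le]
  have harith : (2 * Fs ^ 2 / s) / t1 ^ 2 ≤ δ / 4 := by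
    rw [ht1sq]
    have heq : (2 * Fs ^ 2 / s) / (ε ^ 2 / k * Fs ^ 2) = 2 * k / (s * ε ^ 2) := by
      field_simp
    rw [heq, div_le_div_iff₀ (by positivity) (by norm_num : (0:ℝ) < 4)]
    have hsb' : 8 * (k:ℝ) ≤ s * (δ * ε ^ 2) := by
      rw [ge_iff_le, div_le_iff₀ (by positivity)] at hsbig
      linarith
    nlinarith
  constructor
  · -- first bound
    set g1 : (Fin s → Fin n) → ℝ := fun ω => ((∑ i, Y (ω i)) / s - Fs) ^ 2 with hg1
    have hg1nn : ∀ ω, 0 ≤ g1 ω := fun ω => sq_nonneg _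
    have himp : ∀ ω : Fin s → Fin n, (ε / Real.sqrt k * frobNorm B ^ 2
          ≤ |frobNorm (samplingMatrix p s ω * B) ^ 2 - frobNorm B ^ 2|) → t1 ^ 2 ≤ g1 ω := by
      intro ω hω
      rw [hfrob, hWBfrob ω, ← ht1] at hω
      have h2 := pow_le_pow_left₀ ht1pos.le hω 2
      rwa [sq_abs] at h2
    have hEg : expec p g1 ≤ 2 * Fs ^ 2 / s := by
      have heq : ∀ ω : Fin s → Fin n, g1 ω
          = 1 / (s:ℝ)^2 * (∑ i, Y (ω i) - s * (∑ j, p j * Y j)) ^ 2 := by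
        intro ω
        simp only [hg1]
        rw [hμY]
        field_simp
      calc expec p g1
          = expec p (fun ω : Fin s → Fin n =>
              1/(s:ℝ)^2 * (∑ i, Y (ω i) - s * (∑ j, p j * Y j))^2) := by
            unfold expec
            exact Finset.sum_congr rfl fun ω _ => by rw [heq ω]
        _ = 1/(s:ℝ)^2 * ((s:ℝ) * ((∑ j, p j * Y j ^ 2) - (∑ j, p j * Y j)^2)) := by
            rw [expec_const_mul, expec_var p hp1 Y]
        _ ≤ 2 * Fs ^ 2 / s := by
            rw [hμY]
            have hkey : (1:ℝ)/(s:ℝ)^2 * ((s:ℝ) * ((∑ j, p j * Y j ^ 2) - Fs^2))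
                = ((∑ j, p j * Y j ^ 2) - Fs^2)/s := by
              field_simp
            rw [hkey]
            gcongr
            nlinarith [hpY2, sq_nonneg Fs]
    calc probOf p _ ≤ expec p g1 / t1^2 := markov p hp0 hg1nn (pow_pos ht1pos 2) himp
      _ ≤ (2 * Fs^2/s)/t1^2 := by gcongr
      _ ≤ δ/4 := harith
  · -- second bound
    set G : Fin d → Fin d → Fin n → ℝ := fun a b j => B j a * B j b / p j with hG
    have hGμ : ∀ a b : Fin d, (∑ j, p j * G a b j) = ∑ j, B j a * B j b := by
      intro a b
      refine Finset.sum_congr rfl fun j _ => ?_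
      by_cases h : p j = 0
      · simp [hG, h, hBzero j h]
      · simp only [hG]; field_simp
    have hent : ∀ (ω : Fin s → Fin n) (a b : Fin d),
        (Bᵀ * (samplingMatrix p s ω)ᵀ * samplingMatrix p s ω * B) a b
          = (∑ i, G a b (ω i)) / s := by
      intro ω a b
      have hm : Bᵀ * (samplingMatrix p s ω)ᵀ * samplingMatrix p s ω * B
          = (samplingMatrix p s ω * B)ᵀ * (samplingMatrix p s ω * B) := by
        rw [Matrix.transpose_mul]
        simp only [Matrix.mul_assoc]
      rw [hm, Matrix.mul_apply]
      have h1 : ∀ i : Fin s,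
          (samplingMatrix p s ω * B)ᵀ a i * (samplingMatrix p s ω * B) i b
            = G a b (ω i) / s := by
        intro i
        rw [Matrix.transpose_apply, hWBent, hWBent, div_mul_div_comm,
          Real.mul_self_sqrt (mul_nonneg (Nat.cast_nonneg s) (hp0 _))]
        simp only [hG]
        rw [div_div, mul_comm ((s:ℝ)) (p (ω i))]
      rw [Finset.sum_congr rfl fun i (_ : i ∈ Finset.univ) => h1 i, ← Finset.sum_div]
    have hBB : ∀ a b : Fin d, (Bᵀ * B) a b = ∑ j, B j a * B j b := by
      intro a b
      rw [Matrix.mul_apply]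
      simp [Matrix.transpose_apply]
    set g2 : (Fin s → Fin n) → ℝ := fun ω =>
      ∑ a : Fin d, ∑ b : Fin d, ((∑ i, G a b (ω i)) / s - ∑ j, B j a * B j b) ^ 2 with hg2
    have hg2nn : ∀ ω, 0 ≤ g2 ω := fun ω => by
      simp only [hg2]; positivity
    have hfr2 : ∀ ω : Fin s → Fin n,
        frobNorm (Bᵀ * (samplingMatrix p s ω)ᵀ * samplingMatrix p s ω * B - Bᵀ * B) ^ 2
          = g2 ω := by
      intro ω
      rw [frobNorm_sq]
      simp only [hg2]
      refine Finset.sum_congr rfl fun a _ => Finset.sum_congr rfl fun b _ => ?_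
      rw [Matrix.sub_apply, hent ω a b, hBB a b]
    have himp : ∀ ω : Fin s → Fin n, (ε / Real.sqrt k * frobNorm B ^ 2
          ≤ frobNorm (Bᵀ * (samplingMatrix p s ω)ᵀ * samplingMatrix p s ω * B - Bᵀ * B))
        → t1 ^ 2 ≤ g2 ω := by
      intro ω hω
      rw [hfrob, ← ht1] at hω
      have h2 := pow_le_pow_left₀ ht1pos.le hω 2
      rwa [hfr2 ω] at h2
    have hterm : ∀ a b : Fin d,
        expec p (fun ω : Fin s → Fin n =>
            ((∑ i, G a b (ω i)) / s - ∑ j, B j a * B j b) ^ 2)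
          ≤ (∑ j, p j * (G a b j)^2) / s := by
      intro a b
      have heq : ∀ ω : Fin s → Fin n,
          ((∑ i, G a b (ω i)) / s - ∑ j, B j a * B j b) ^ 2
            = 1/(s:ℝ)^2 * (∑ i, G a b (ω i) - s * (∑ j, p j * G a b j)) ^ 2 := by
        intro ω
        rw [hGμ a b]
        field_simp
      calc expec p (fun ω : Fin s → Fin n =>
              ((∑ i, G a b (ω i)) / s - ∑ j, B j a * B j b) ^ 2)
          = expec p (fun ω : Fin s → Fin n =>
              1/(s:ℝ)^2 * (∑ i, G a b (ω i) - s * (∑ j, p j * G a b j)) ^ 2) := by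
            unfold expec
            exact Finset.sum_congr rfl fun ω _ => by simp only []; rw [heq ω]
        _ = 1/(s:ℝ)^2 * ((s:ℝ) * ((∑ j, p j * (G a b j)^2) - (∑ j, p j * G a b j)^2)) := by
            rw [expec_const_mul, expec_var p hp1 (G a b)]
        _ ≤ (∑ j, p j * (G a b j)^2) / s := by
            have hkey : (1:ℝ)/(s:ℝ)^2 * ((s:ℝ) * ((∑ j, p j * (G a b j)^2) - (∑ j, p j * G a b j)^2))
                = ((∑ j, p j * (G a b j)^2) - (∑ j, p j * G a b j)^2)/s := by
              field_simp
            rw [hkey]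
            gcongr
            nlinarith [sq_nonneg (∑ j, p j * G a b j)]
    have hswap : (∑ a : Fin d, ∑ b : Fin d, ∑ j, p j * (G a b j)^2)
        = ∑ j, p j * Y j ^ 2 := by
      have h1 : ∀ a : Fin d, (∑ b : Fin d, ∑ j, p j * (G a b j)^2)
          = ∑ j, ∑ b : Fin d, p j * (G a b j)^2 := fun a => Finset.sum_comm
      rw [Finset.sum_congr rfl fun a (_ : a ∈ Finset.univ) => h1 a, Finset.sum_comm]
      refine Finset.sum_congr rfl fun j _ => ?_
      have h2 : ∀ a b : Fin d, p j * (G a b j)^2 = p j * (B j a ^2 * B j b ^2 / p j ^2) := by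
        intro a b
        simp only [hG]
        rw [div_pow, mul_pow]
      rw [Finset.sum_congr rfl fun a (_ : a ∈ Finset.univ) =>
        Finset.sum_congr rfl fun b (_ : b ∈ Finset.univ) => h2 a b]
      have h3 : Y j ^ 2 = rB j ^2 / p j ^2 := by
        simp only [hYdef]
        rw [div_pow]
      rw [h3]
      calc ∑ a : Fin d, ∑ b : Fin d, p j * (B j a ^2 * B j b ^2 / p j ^2)
          = p j / p j ^2 * ∑ a : Fin d, ∑ b : Fin d, B j a ^2 * B j b ^2 := by
            rw [Finset.mul_sum]
            refine Finset.sum_congr rfl fun a _ => ?_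
            rw [Finset.mul_sum]
            refine Finset.sum_congr rfl fun b _ => ?_
            ring
        _ = p j / p j ^2 * (rB j * rB j) := by
            rw [← Finset.sum_mul_sum]
        _ = p j * (rB j ^2 / p j ^2) := by ring
    have hEg : expec p g2 ≤ 2 * Fs ^ 2 / s := by
      have hsum : expec p g2 = ∑ a : Fin d, ∑ b : Fin d,
          expec p (fun ω : Fin s → Fin n =>
            ((∑ i, G a b (ω i)) / s - ∑ j, B j a * B j b) ^ 2) := by
        simp only [hg2]
        rw [expec_sum]
        exact Finset.sum_congr rfl fun a _ => expec_sum p Finset.univ _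
      rw [hsum]
      calc (∑ a : Fin d, ∑ b : Fin d, expec p (fun ω : Fin s → Fin n =>
              ((∑ i, G a b (ω i)) / s - ∑ j, B j a * B j b) ^ 2))
          ≤ ∑ a : Fin d, ∑ b : Fin d, (∑ j, p j * (G a b j)^2)/s :=
            Finset.sum_le_sum fun a _ => Finset.sum_le_sum fun b _ => hterm a b
        _ = (∑ j, p j * Y j ^ 2)/s := by
            have e1 : ∀ a : Fin d, (∑ b : Fin d, (∑ j, p j * (G a b j)^2)/(s:ℝ))
                = (∑ b : Fin d, ∑ j, p j * (G a b j)^2)/(s:ℝ) :=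
              fun a => (Finset.sum_div _ _ _).symm
            rw [Finset.sum_congr rfl fun a (_ : a ∈ Finset.univ) => e1 a, ← Finset.sum_div,
              hswap]
        _ ≤ 2 * Fs ^ 2 / s := by
            gcongr
            nlinarith [hpY2]
    refine le_trans (markov p hp0 hg2nn (pow_pos ht1pos 2) himp) ?_
    calc expec p g2 / t1^2 ≤ (2 * Fs^2/(s:ℝ))/t1^2 := by gcongr
      _ ≤ δ/4 := harith
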